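/- Let n ≥ 4 be an even integer and let c be a real number with 0 < c ≤ 1 − 4/(n+1)². Then the set { √(1+cz) : z ∈ 𝔻 } is contained in Ω_{nL} = φ_{nL}(𝔻). (Consequently S*(√(1+cz)) ⊂ S*_{nL}.) -/

import Mathlib

open Complex Metric Set

/-- The function φ_{nL}(z) = 1 + n z/(n+1) + z^n/(n+1). -/
noncomputable def phinL (n : ℕ) (z : ℂ) : ℂ :=
  1 + (n : ℂ) * z / ((n : ℂ) + 1) + z ^ n / ((n : ℂ) + 1)

/-- Ω_{nL} = φ_{nL}(𝔻), the image of the open unit disk. -/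
def OmeganL (n : ℕ) : Set ℂ := phinL n '' ball (0 : ℂ) 1

/-- f is analytic on the unit disk with f(0) = 0 and f'(0) = 1. -/
def IsNormalizedAnalytic (f : ℂ → ℂ) : Prop :=
  AnalyticOnNhd ℂ f (ball (0 : ℂ) 1) ∧ f 0 = 0 ∧ deriv f 0 = 1

/-- p is subordinate to ψ on the unit disk. -/
def Subord (p ψ : ℂ → ℂ) : Prop :=
  ∃ ω : ℂ → ℂ, AnalyticOnNhd ℂ ω (ball (0 : ℂ) 1) ∧ ω 0 = 0 ∧
    (∀ z ∈ ball (0 : ℂ) 1, ω z ∈ ball (0 : ℂ) 1) ∧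
    (∀ z ∈ ball (0 : ℂ) 1, p z = ψ (ω z))

/-- Membership in the class S*_{nL}. -/
def MemSnL (n : ℕ) (f : ℂ → ℂ) : Prop :=
  IsNormalizedAnalytic f ∧ (∀ z ∈ ball (0 : ℂ) 1, z ≠ 0 → f z ≠ 0) ∧
  Subord (fun z => if z = 0 then 1 else z * deriv f z / f z) (phinL n)

lemma re_sqrt_nonneg (w : ℂ) : 0 ≤ (w ^ ((1:ℂ)/2)).re := by
  by_cases h : w = 0
  · simp [h, Complex.zero_cpow (by norm_num : (1:ℂ)/2 ≠ 0)]
  · rw [Complex.cpow_def_of_ne_zero h, Complex.exp_re]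
    apply mul_nonneg (Real.exp_pos _).le
    have him : (Complex.log w * (1/2 : ℂ)).im = w.arg / 2 := by
      simp [Complex.mul_im, Complex.log_im]
      ring
    rw [him]
    exact Real.cos_nonneg_of_mem_Icc ⟨by linarith [Complex.neg_pi_lt_arg w],
      by linarith [Complex.arg_le_pi w]⟩

lemma sqrt_dist_bound (c : ℝ) (hc1 : 0 < c) (hc2 : c ≤ 1) (z : ℂ) (hz : ‖z‖ < 1) :
    ‖(1 + (c:ℂ)*z) ^ ((1:ℂ)/2) - 1‖ < 1 - Real.sqrt (1 - c) := by
  set a : ℝ := 1 - c * ‖z‖ with ha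
  have hz0 : 0 ≤ ‖z‖ := norm_nonneg z
  have ha0 : 0 < a := by nlinarith
  have hac : 1 - c < a := by nlinarith
  have ha1 : a ≤ 1 := by nlinarith
  set w : ℂ := 1 + (c:ℂ)*z with hwdef
  have hwre : w.re = 1 + c * z.re := by
    simp [hwdef, Complex.add_re, Complex.mul_re]
  have hzre : -‖z‖ ≤ z.re := by
    have := Complex.abs_re_le_norm z
    cases' abs_le.mp this with h1 h2
    linarith
  have hwre' : a ≤ w.re := by rw [hwre]; nlinarith
  have hw0 : w ≠ 0 := by
    intro h
    rw [h] at hwre'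
    simp at hwre'
    linarith
  set t : ℂ := w ^ ((1:ℂ)/2) with htdef
  have ht2 : t ^ 2 = w := by
    rw [htdef, show ((1:ℂ)/2) = (((2:ℕ)):ℂ)⁻¹ by norm_num]
    exact Complex.cpow_nat_inv_pow w two_ne_zero
  have htre : 0 ≤ t.re := re_sqrt_nonneg w
  have htre2 : a ≤ t.re ^ 2 := by
    have h := congrArg Complex.re ht2
    rw [pow_two, Complex.mul_re] at h
    nlinarith [sq_nonneg t.im]
  have hsq : Real.sqrt a ≤ t.re := by
    calc Real.sqrt a ≤ Real.sqrt (t.re ^ 2) := Real.sqrt_le_sqrt htre2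
    _ = t.re := by rw [Real.sqrt_sq htre]
  have ht1 : 1 + Real.sqrt a ≤ ‖t + 1‖ := by
    have h1 : (t + 1).re ≤ ‖t + 1‖ := by
      exact Complex.re_le_norm _
    have h2 : (t + 1).re = t.re + 1 := by simp
    linarith
  have key : (t - 1) * (t + 1) = (c:ℂ) * z := by
    have h : (t - 1) * (t + 1) = t ^ 2 - 1 := by ring
    rw [h, ht2, hwdef]; ring
  have hnorm : ‖t - 1‖ * ‖t + 1‖ = c * ‖z‖ := by
    rw [← norm_mul, key, norm_mul]
    simp [Complex.norm_real, abs_of_pos hc1]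
  -- conclude
  have hs : Real.sqrt a * Real.sqrt a = a := Real.mul_self_sqrt ha0.le
  have hs0 : 0 ≤ Real.sqrt a := Real.sqrt_nonneg a
  have hs' : Real.sqrt (1 - c) < Real.sqrt a := Real.sqrt_lt_sqrt (by linarith) hac
  have hs'0 : 0 ≤ Real.sqrt (1 - c) := Real.sqrt_nonneg _
  have hu0 : 0 ≤ ‖t - 1‖ := norm_nonneg _
  have hub : ‖t - 1‖ ≤ 1 - Real.sqrt a := by
    have hca : c * ‖z‖ = 1 - a := by rw [ha]; ring
    nlinarith [hnorm, ht1]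
  linarith

lemma ball_subset_Omega (n : ℕ) (hn : 4 ≤ n) :
    ball (1:ℂ) (((n:ℝ) - 1)/((n:ℝ) + 1)) ⊆ OmeganL n := by
  have hn4 : (4:ℝ) ≤ (n:ℝ) := by exact_mod_cast hn
  have hnne : n ≠ 0 := by omega
  set ρ : ℝ := ((n:ℝ) - 1)/((n:ℝ) + 1) with hρ
  have hρ0 : 0 < ρ := by
    apply div_pos <;> linarith
  have hden : ((n:ℂ) + 1) ≠ 0 := by
    rw [show ((n:ℂ)+1) = (((n:ℝ)+1 : ℝ):ℂ) by push_cast; ring]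
    exact Complex.ofReal_ne_zero.mpr (by positivity)
  have hφ0 : phinL n 0 = 1 := by
    simp [phinL, zero_pow hnne]
  have hcont : Continuous (phinL n) := by
    unfold phinL
    continuity
  have hanal : AnalyticOnNhd ℂ (phinL n) (ball 0 1) := by
    intro z _
    unfold phinL
    apply AnalyticAt.add
    apply AnalyticAt.add
    · exact analyticAt_const
    · exact (analyticAt_const.mul (analyticAt_id)).div analyticAt_const hden
    · exact ((analyticAt_id).pow n).div analyticAt_const hden
  have hval : phinL n ((1/2 : ℝ) : ℂ) ≠ 1 := by
    have h1 : phinL n ((1/2 : ℝ) : ℂ)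
        = ((1 + (n:ℝ) * (1/2) / ((n:ℝ)+1) + (1/2:ℝ)^n / ((n:ℝ)+1) : ℝ) : ℂ) := by
      unfold phinL
      push_cast
      ring
    intro h
    rw [h1, show (1:ℂ) = ((1:ℝ):ℂ) from by norm_num] at h
    have h2 := Complex.ofReal_inj.mp h
    have : 0 < (n:ℝ) * (1/2) / ((n:ℝ)+1) + (1/2:ℝ)^n / ((n:ℝ)+1) := by positivity
    linarith
  have hΩopen : IsOpen (OmeganL n) := by
    rcases hanal.is_constant_or_isOpen (convex_ball (0:ℂ) 1).isPreconnected with ⟨w, hw⟩ | hopen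
    · exfalso
      have h0 : phinL n 0 = w := hw 0 (by simp)
      have hh : phinL n ((1/2 : ℝ) : ℂ) = w := by
        apply hw
        simp [mem_ball_zero_iff]
        norm_num
      rw [hφ0] at h0
      exact hval (hh.trans h0.symm)
    · exact hopen _ subset_rfl isOpen_ball
  have hK : IsCompact (phinL n '' closedBall (0:ℂ) 1) :=
    (isCompact_closedBall _ _).image hcont
  have hclos : closure (OmeganL n) ⊆ phinL n '' closedBall (0:ℂ) 1 :=
    closure_minimal (image_mono ball_subset_closedBall) hK.isClosed
  apply (convex_ball (1:ℂ) ρ).isPreconnected.subset_of_closure_inter_subset hΩopen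
  · exact ⟨1, ⟨mem_ball_self hρ0, ⟨0, by simp, hφ0⟩⟩⟩
  · rintro x ⟨hx1, hx2⟩
    obtain ⟨v, hv, rfl⟩ := hclos hx1
    rw [mem_closedBall_zero_iff] at hv
    rcases lt_or_eq_of_le hv with hlt | heq
    · exact ⟨v, mem_ball_zero_iff.mpr hlt, rfl⟩
    · exfalso
      have hd : dist (phinL n v) 1 < ρ := mem_ball.mp hx2
      rw [dist_eq_norm] at hd
      have hform : phinL n v - 1 = ((n:ℂ)*v + v^n) / ((n:ℂ)+1) := by
        unfold phinL
        field_simp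
        ring
      have hnorm1 : ‖((n:ℂ)+1)‖ = (n:ℝ) + 1 := by
        rw [show ((n:ℂ)+1) = (((n:ℝ)+1 : ℝ) : ℂ) by push_cast; ring, Complex.norm_real,
          Real.norm_eq_abs, abs_of_pos (by linarith)]
      have hlow : (n:ℝ) - 1 ≤ ‖(n:ℂ)*v + v^n‖ := by
        have h1 : ‖(n:ℂ)*v‖ - ‖-(v^n)‖ ≤ ‖(n:ℂ)*v - (-(v^n))‖ := norm_sub_norm_le _ _
        have h2 : ‖(n:ℂ)*v‖ = (n:ℝ) := by
          rw [norm_mul, Complex.norm_natCast, heq, mul_one]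
        have h3 : ‖-(v^n)‖ = 1 := by
          rw [norm_neg, norm_pow, heq, one_pow]
        rw [h2, h3] at h1
        simpa using h1
      rw [hform, norm_div, hnorm1] at hd
      rw [hρ, div_lt_div_iff₀ (by linarith) (by linarith)] at hd
      nlinarith [mul_le_mul_of_nonneg_right hlow (by linarith : (0:ℝ) ≤ (n:ℝ)+1)]

theorem stmt6 (n : ℕ) (hn : 4 ≤ n) (hne : Even n) (c : ℝ)
    (hc1 : 0 < c) (hc2 : c ≤ 1 - 4 / ((n : ℝ) + 1) ^ 2) :
    (fun z : ℂ => (1 + (c : ℂ) * z) ^ ((1 : ℂ) / 2)) '' ball (0 : ℂ) 1 ⊆ OmeganL n := by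
  have hn4 : (4:ℝ) ≤ (n:ℝ) := by exact_mod_cast hn
  have hpos : (0:ℝ) < (n:ℝ) + 1 := by linarith
  rintro _ ⟨z, hz, rfl⟩
  apply ball_subset_Omega n hn
  rw [mem_ball, dist_eq_norm]
  have hc2' : c ≤ 1 := by
    have : 0 < 4 / ((n:ℝ) + 1)^2 := by positivity
    linarith
  have hb := sqrt_dist_bound c hc1 hc2' z (mem_ball_zero_iff.mp hz)
  have hs : 2 / ((n:ℝ) + 1) ≤ Real.sqrt (1 - c) := by
    have h1 : (2 / ((n:ℝ)+1))^2 ≤ 1 - c := by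
      rw [div_pow]
      norm_num
      linarith
    calc 2 / ((n:ℝ) + 1) = Real.sqrt ((2 / ((n:ℝ)+1))^2) := by
          rw [Real.sqrt_sq (by positivity)]
      _ ≤ Real.sqrt (1 - c) := Real.sqrt_le_sqrt h1
  have hrw : ((n:ℝ) - 1)/((n:ℝ) + 1) = 1 - 2/((n:ℝ)+1) := by
    field_simp
    ring
  rw [hrw]
  calc ‖(1 + (c:ℂ)*z) ^ ((1:ℂ)/2) - 1‖ < 1 - Real.sqrt (1 - c) := hb
    _ ≤ 1 - 2/((n:ℝ)+1) := by linarith
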